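/- Let Φ be a 3-CNF formula with clauses C_1,…,C_n, and let E consist of c_0, …, c_{n+1} together with exactly one of a_i and na_i for each i ∈ [1,m]. If for each clause C_i at least one atom of NV(c_i) is not in E, then E is an elementary set for P^Φ. -/
import Mathlib


structure Rule (α : Type) where
  B : Finset α
  F : Finset α
  H : Finset α

variable {α : Type}

/-- Z is outbound in Y for program P. -/
def Outbound [DecidableEq α] (P : Set (Rule α)) (Y Z : Finset α) : Prop :=
  ∃ r ∈ P, (r.H ∩ Z).Nonempty ∧ (r.B ∩ (Y \ Z)).Nonempty ∧
    r.B ∩ Z = ∅ ∧ r.H ∩ (Y \ Z) = ∅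

/-- Y is an elementary set for P. -/
def Elementary [DecidableEq α] (P : Set (Rule α)) (Y : Finset α) : Prop :=
  Y.Nonempty ∧ ∀ Z : Finset α, Z ⊂ Y → Z.Nonempty → Outbound P Y Z

/-- X is a disjunctive set for P. -/
def DisjSet [DecidableEq α] (P : Set (Rule α)) (X : Finset α) : Prop :=
  ∃ r ∈ P, 1 < (r.H ∩ X).card

/-- The projection P_X of P on a set X of atoms. -/
def proj [DecidableEq α] (P : Set (Rule α)) (X : Finset α) : Set (Rule α) :=
  {r' | ∃ r ∈ P, (r.B ∩ X).Nonempty ∧ (r.H ∩ X).Nonempty ∧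
        r' = ⟨r.B ∩ X, ∅, r.H ∩ X⟩}

/-- P is head-elementary-set-free. -/
def HEF [DecidableEq α] (P : Set (Rule α)) : Prop :=
  ∀ r ∈ P, ∀ E : Finset α, Elementary P E → (E ∩ r.H).card ≤ 1

/-- Atoms of the program `P^Φ`. -/
inductive Atom : Type
  | phi : Atom
  | a : ℕ → Atom
  | na : ℕ → Atom
  | c : ℕ → Atom
deriving DecidableEq

/-- The atom opposite to a literal (variable index, sign). -/
def oppAtom : ℕ × Bool → Atom
  | (v, true) => Atom.na v
  | (v, false) => Atom.a v

/-- The atom corresponding to a literal. -/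
def litAtom : ℕ × Bool → Atom
  | (v, true) => Atom.a v
  | (v, false) => Atom.na v

/-- NV(c_i): opposites of the atoms of the literals of clause C_i. -/
def NV (C : ℕ → Fin 3 → ℕ × Bool) (i : ℕ) : Finset Atom :=
  {oppAtom (C i 0), oppAtom (C i 1), oppAtom (C i 2)}

/-- The program `P^Φ` associated with a 3-CNF with m variables `A_1,…,A_m`
and n clauses `C_1,…,C_n`, the clauses given by `C`. -/
def PPhi (m n : ℕ) (C : ℕ → Fin 3 → ℕ × Bool) : Set (Rule Atom) :=
  ({⟨{Atom.phi}, ∅, {Atom.c 0, Atom.c (n+1)}⟩,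
    ⟨{Atom.c 0}, ∅, {Atom.c 1}⟩,
    ⟨{Atom.c (n+1), Atom.na 1}, ∅, {Atom.a 1}⟩,
    ⟨{Atom.c (n+1), Atom.a 1}, ∅, {Atom.na 1}⟩,
    ⟨{Atom.a m, Atom.na m}, ∅, {Atom.c 0}⟩} : Set (Rule Atom)) ∪
  {r | ∃ i ∈ Finset.Icc 1 n, ∃ α ∈ NV C i,
        r = ⟨{Atom.c i, α}, ∅, {Atom.c (i+1)}⟩} ∪
  {r | ∃ i ∈ Finset.Icc 1 (m-1),
        r = ⟨{Atom.a i, Atom.na (i+1)}, ∅, {Atom.a (i+1)}⟩ ∨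
        r = ⟨{Atom.a i, Atom.a (i+1)}, ∅, {Atom.na (i+1)}⟩ ∨
        r = ⟨{Atom.na i, Atom.na (i+1)}, ∅, {Atom.a (i+1)}⟩ ∨
        r = ⟨{Atom.na i, Atom.a (i+1)}, ∅, {Atom.na (i+1)}⟩}

/-- All variable indices mentioned by clauses 1..n lie in [1,m]. -/
def ValidCNF (m n : ℕ) (C : ℕ → Fin 3 → ℕ × Bool) : Prop :=
  ∀ i ∈ Finset.Icc 1 n, ∀ j : Fin 3, (C i j).1 ∈ Finset.Icc 1 m

/-- Truth assignment X satisfies the 3-CNF. -/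
def Sat (n : ℕ) (C : ℕ → Fin 3 → ℕ × Bool) (X : ℕ → Bool) : Prop :=
  ∀ i ∈ Finset.Icc 1 n, ∃ j : Fin 3, X (C i j).1 = (C i j).2

/-- Cycle reachability: if a predicate is closed under stepping back one position
along a cycle of length N, and holds somewhere, it holds everywhere. -/
lemma reachAll (N : ℕ) (hN : 0 < N) (p : ℕ → Prop)
    (h : ∀ k, k < N → p k → p (if k = 0 then N - 1 else k - 1))
    (i : ℕ) (hi : i < N) (hpi : p i) :
    ∀ j, j < N → p j := by
  have key : ∀ t, p ((i + (N - 1) * t) % N) := by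
    intro t
    induction t with
    | zero => simpa [Nat.mod_eq_of_lt hi] using hpi
    | succ t ih =>
      set k := (i + (N - 1) * t) % N with hk
      have hkN : k < N := Nat.mod_lt _ hN
      have hpk := h k hkN ih
      have heq : (i + (N - 1) * (t + 1)) % N = (if k = 0 then N - 1 else k - 1) := by
        have h1 : i + (N - 1) * (t + 1) = (i + (N - 1) * t) + (N - 1) := by ring
        rw [h1, Nat.add_mod, ← hk]
        by_cases hk0 : k = 0
        · simp [hk0, Nat.mod_eq_of_lt (by omega : N - 1 < N)]
        · have h2 : k + (N - 1) % N = (k - 1) + N := by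
            rw [Nat.mod_eq_of_lt (by omega : N - 1 < N)]; omega
          rw [h2, Nat.add_mod_right, Nat.mod_eq_of_lt (by omega)]; simp [hk0]
      rw [heq]; exact hpk
  intro j hj
  have hkey := key (i + (N - j))
  have harith : (i + (N - 1) * (i + (N - j))) % N = j := by
    have hu : 1 ≤ N - j := by omega
    have h1 : i + (N - 1) * (i + (N - j)) = j + (i + (N - j) - 1) * N := by
      zify [hu, hj.le, (by omega : 1 ≤ N), (by omega : 1 ≤ i + (N - j))]
      ring
    rw [h1, Nat.add_mul_mod_self_right, Nat.mod_eq_of_lt hj]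
  rwa [harith] at hkey

lemma outbound_helper [DecidableEq α] (P : Set (Rule α)) (Y Z : Finset α)
    (r : Rule α) (hr : r ∈ P) (h : α) (hH : r.H = {h}) (hhZ : h ∈ Z)
    (b : α) (hbB : b ∈ r.B) (hbY : b ∈ Y) (hbZ : b ∉ Z)
    (hBZ : ∀ x ∈ r.B, x ∉ Z) :
    Outbound P Y Z := by
  refine ⟨r, hr, ⟨h, Finset.mem_inter.2 ⟨by simp [hH], hhZ⟩⟩,
    ⟨b, Finset.mem_inter.2 ⟨hbB, Finset.mem_sdiff.2 ⟨hbY, hbZ⟩⟩⟩, ?_, ?_⟩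
  · rw [Finset.eq_empty_iff_forall_notMem]
    intro x hx
    rw [Finset.mem_inter] at hx
    exact hBZ x hx.1 hx.2
  · rw [Finset.eq_empty_iff_forall_notMem]
    intro x hx
    rw [Finset.mem_inter, hH, Finset.mem_singleton, Finset.mem_sdiff] at hx
    obtain ⟨rfl, _, h2⟩ := hx
    exact h2 hhZ

lemma outbound_pair [DecidableEq α] (P : Set (Rule α)) (Y Z : Finset α)
    (r : Rule α) (hr : r ∈ P) (h b b' : α)
    (hH : r.H = {h}) (hB : r.B = {b, b'})
    (hhZ : h ∈ Z) (hbY : b ∈ Y) (hbZ : b ∉ Z) (hb'Z : b' ∉ Z) :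
    Outbound P Y Z := by
  refine outbound_helper P Y Z r hr h hH hhZ b (by simp [hB]) hbY hbZ ?_
  intro x hx
  rw [hB, Finset.mem_insert, Finset.mem_singleton] at hx
  rcases hx with rfl | rfl
  · exact hbZ
  · exact hb'Z

theorem stmt12 (m n : ℕ) (hm : 1 ≤ m) (hn : 1 ≤ n)
    (C : ℕ → Fin 3 → ℕ × Bool) (hC : ValidCNF m n C)
    (Q : ℕ → Bool) (E : Finset Atom)
    (hEdef : E = (Finset.Icc 0 (n+1)).image Atom.c ∪
      (Finset.Icc 1 m).image (fun i => if Q i then Atom.a i else Atom.na i))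
    (hcov : ∀ i ∈ Finset.Icc 1 n, ∃ β ∈ NV C i, β ∉ E) :
    Elementary (PPhi m n C) E := by
  set v : ℕ → Atom := fun i => if Q i then Atom.a i else Atom.na i with hv
  set vb : ℕ → Atom := fun i => if Q i then Atom.na i else Atom.a i with hvb
  have hcE : ∀ j, Atom.c j ∈ E ↔ j ≤ n + 1 := by
    intro j
    rw [hEdef]
    simp only [Finset.mem_union, Finset.mem_image, Finset.mem_Icc]
    constructor
    · rintro (⟨x, hx, hxe⟩ | ⟨x, hx, hxe⟩)
      · obtain rfl := Atom.c.inj hxe; omega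
      · simp only [hv] at hxe; split_ifs at hxe <;> simp at hxe
    · intro hj; exact Or.inl ⟨j, ⟨by omega, hj⟩, rfl⟩
  have haE : ∀ j, Atom.a j ∈ E ↔ (1 ≤ j ∧ j ≤ m ∧ Q j = true) := by
    intro j
    rw [hEdef]
    simp only [Finset.mem_union, Finset.mem_image, Finset.mem_Icc]
    constructor
    · rintro (⟨x, hx, hxe⟩ | ⟨x, hx, hxe⟩)
      · simp at hxe
      · simp only [hv] at hxe
        by_cases hq : Q x = true
        · rw [if_pos hq] at hxe
          obtain rfl := Atom.a.inj hxe
          exact ⟨hx.1, hx.2, hq⟩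
        · rw [if_neg hq] at hxe
          exact absurd hxe (by simp)
    · rintro ⟨h1, h2, hq⟩
      exact Or.inr ⟨j, ⟨h1, h2⟩, by simp only [hv]; simp [hq]⟩
  have hnaE : ∀ j, Atom.na j ∈ E ↔ (1 ≤ j ∧ j ≤ m ∧ Q j = false) := by
    intro j
    rw [hEdef]
    simp only [Finset.mem_union, Finset.mem_image, Finset.mem_Icc]
    constructor
    · rintro (⟨x, hx, hxe⟩ | ⟨x, hx, hxe⟩)
      · simp at hxe
      · simp only [hv] at hxe
        by_cases hq : Q x = true
        · rw [if_pos hq] at hxe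
          exact absurd hxe (by simp)
        · rw [if_neg hq] at hxe
          obtain rfl := Atom.na.inj hxe
          exact ⟨hx.1, hx.2, by simpa using hq⟩
    · rintro ⟨h1, h2, hq⟩
      exact Or.inr ⟨j, ⟨h1, h2⟩, by simp only [hv]; simp [hq]⟩
  have hvE : ∀ j, 1 ≤ j → j ≤ m → v j ∈ E := by
    intro j h1 h2
    simp only [hv]
    by_cases hq : Q j = true
    · simp only [hq, if_true]; exact (haE j).2 ⟨h1, h2, hq⟩
    · simp only [hq, if_false]
      exact (hnaE j).2 ⟨h1, h2, by simpa using hq⟩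
  have hvbE : ∀ j, vb j ∉ E := by
    intro j
    simp only [hvb]
    by_cases hq : Q j = true
    · simp only [hq, if_true]
      intro hmem
      rcases (hnaE j).1 hmem with ⟨-, -, hq'⟩
      rw [hq] at hq'; exact Bool.true_eq_false.mp hq'
    · simp only [hq, if_false]
      intro hmem
      rcases (haE j).1 hmem with ⟨-, -, hq'⟩
      exact hq hq'
  -- rule membership lemmas
  have hlast : (⟨{Atom.a m, Atom.na m}, ∅, {Atom.c 0}⟩ : Rule Atom) ∈ PPhi m n C := by
    unfold PPhi
    refine Or.inl (Or.inl ?_)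
    simp
  have hc0c1 : (⟨{Atom.c 0}, ∅, {Atom.c 1}⟩ : Rule Atom) ∈ PPhi m n C := by
    unfold PPhi
    refine Or.inl (Or.inl ?_)
    simp
  have hfirstvar : (⟨{Atom.c (n+1), vb 1}, ∅, {v 1}⟩ : Rule Atom) ∈ PPhi m n C := by
    unfold PPhi
    refine Or.inl (Or.inl ?_)
    simp only [hv, hvb]
    by_cases hq : Q 1 = true <;> simp [hq]
  have hclause : ∀ i, 1 ≤ i → i ≤ n → ∀ β ∈ NV C i,
      (⟨{Atom.c i, β}, ∅, {Atom.c (i+1)}⟩ : Rule Atom) ∈ PPhi m n C := by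
    intro i h1 h2 β hβ
    unfold PPhi
    exact Or.inl (Or.inr ⟨i, Finset.mem_Icc.2 ⟨h1, h2⟩, β, hβ, rfl⟩)
  have hchain : ∀ i, 1 ≤ i → i ≤ m - 1 →
      (⟨{v i, vb (i+1)}, ∅, {v (i+1)}⟩ : Rule Atom) ∈ PPhi m n C := by
    intro i h1 h2
    unfold PPhi
    refine Or.inr ⟨i, Finset.mem_Icc.2 ⟨h1, h2⟩, ?_⟩
    simp only [hv, hvb]
    by_cases hqi : Q i = true <;> by_cases hqj : Q (i+1) = true <;>
      simp [hqi, hqj]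
  set N : ℕ := n + 2 + m with hN
  set g : ℕ → Atom := fun k => if k ≤ n + 1 then Atom.c k else v (k - (n+1)) with hg
  have hgsurj : ∀ e ∈ E, ∃ k, k < N ∧ g k = e := by
    intro e he
    rw [hEdef] at he
    simp only [Finset.mem_union, Finset.mem_image, Finset.mem_Icc] at he
    rcases he with ⟨x, hx, rfl⟩ | ⟨x, hx, rfl⟩
    · exact ⟨x, by omega, by simp only [hg]; simp [hx.2]⟩
    · refine ⟨n + 1 + x, by omega, ?_⟩
      have h1 : ¬ (n + 1 + x ≤ n + 1) := by omega
      simp only [hg, h1, if_false]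
      congr 1
      omega
  constructor
  · exact ⟨Atom.c 0, (hcE 0).2 (by omega)⟩
  intro Z hZsub hZne
  have hZE : Z ⊆ E := hZsub.subset
  have hvbZ : ∀ j, vb j ∉ Z := fun j hj => hvbE j (hZE hj)
  have hstep : ∀ k, k < N → g k ∈ Z →
      g (if k = 0 then N - 1 else k - 1) ∉ Z → Outbound (PPhi m n C) E Z := by
    intro k hkN hkZ hpk
    by_cases hk0 : k = 0
    · -- c 0 ∈ Z, v m ∉ Z ; rule a_m ∧ na_m → c_0
      subst hk0
      rw [if_pos rfl] at hpk
      have hg0 : g 0 = Atom.c 0 := by simp [hg]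
      have hgp : g (N - 1) = v m := by
        have h1 : ¬ (N - 1 ≤ n + 1) := by omega
        simp only [hg, h1, if_false]
        congr 1
        omega
      rw [hg0] at hkZ
      rw [hgp] at hpk
      refine outbound_pair _ E Z _ hlast (Atom.c 0) (v m) (vb m) rfl ?_ hkZ
        (hvE m hm le_rfl) hpk (hvbZ m)
      show ({Atom.a m, Atom.na m} : Finset Atom) = {v m, vb m}
      simp only [hv, hvb]
      by_cases hq : Q m = true
      · simp [hq]
      · simp [hq, Finset.pair_comm]
    by_cases hk1 : k ≤ n + 1
    · -- c k ∈ Z, c (k-1) ∉ Z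
      rw [if_neg hk0] at hpk
      have hgk : g k = Atom.c k := by simp [hg, hk1]
      have hgp : g (k - 1) = Atom.c (k - 1) := by
        have h1 : k - 1 ≤ n + 1 := by omega
        simp [hg, h1]
      rw [hgk] at hkZ
      rw [hgp] at hpk
      by_cases hke1 : k = 1
      · subst hke1
        exact outbound_pair _ E Z _ hc0c1 (Atom.c 1) (Atom.c 0) (Atom.c 0) rfl
          (by simp) hkZ ((hcE 0).2 (by omega)) hpk hpk
      · obtain ⟨β, hβNV, hβE⟩ := hcov (k - 1) (Finset.mem_Icc.2 ⟨by omega, by omega⟩)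
        have hr := hclause (k - 1) (by omega) (by omega) β hβNV
        have hk2 : k - 1 + 1 = k := by omega
        rw [hk2] at hr
        exact outbound_pair _ E Z _ hr (Atom.c k) (Atom.c (k - 1)) β rfl rfl hkZ
          ((hcE (k - 1)).2 (by omega)) hpk (fun hβZ => hβE (hZE hβZ))
    by_cases hk2 : k = n + 2
    · -- v 1 ∈ Z, c (n+1) ∉ Z
      subst hk2
      rw [if_neg hk0] at hpk
      have hgk : g (n + 2) = v 1 := by
        simp only [hg, hk1, if_false]
        congr 1
        omega
      have hgp : g (n + 2 - 1) = Atom.c (n + 1) := by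
        have h1 : n + 2 - 1 ≤ n + 1 := by omega
        have h2 : n + 2 - 1 = n + 1 := by omega
        simp [hg, h1, h2]
      rw [hgk] at hkZ
      rw [hgp] at hpk
      exact outbound_pair _ E Z _ hfirstvar (v 1) (Atom.c (n+1)) (vb 1) rfl rfl hkZ
        ((hcE (n+1)).2 le_rfl) hpk (hvbZ 1)
    · -- v j ∈ Z, v (j-1) ∉ Z with j = k - (n+1) ∈ [2, m]
      rw [if_neg hk0] at hpk
      have hj2 : n + 3 ≤ k := by omega
      have hjm : k - (n+1) ≤ m := by omega
      have hgk : g k = v (k - (n+1)) := by simp [hg, hk1]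
      have hgp : g (k - 1) = v (k - 1 - (n+1)) := by
        have h1 : ¬ (k - 1 ≤ n + 1) := by omega
        simp [hg, h1]
      rw [hgk] at hkZ
      rw [hgp] at hpk
      have hr := hchain (k - 1 - (n+1)) (by omega) (by omega)
      have he1 : k - 1 - (n+1) + 1 = k - (n+1) := by omega
      rw [he1] at hr
      exact outbound_pair _ E Z _ hr (v (k - (n+1))) (v (k - 1 - (n+1)))
        (vb (k - (n+1))) rfl rfl hkZ (hvE _ (by omega) (by omega)) hpk (hvbZ _)
  by_cases hex : ∃ k, k < N ∧ g k ∈ Z ∧ g (if k = 0 then N - 1 else k - 1) ∉ Z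
  · obtain ⟨k, h1, h2, h3⟩ := hex
    exact hstep k h1 h2 h3
  · exfalso
    push_neg at hex
    obtain ⟨z, hz⟩ := hZne
    obtain ⟨i0, hi0N, hgi0⟩ := hgsurj z (hZE hz)
    have hall : ∀ j, j < N → g j ∈ Z :=
      reachAll N (by omega) (fun k => g k ∈ Z) (fun k hk hp => hex k hk hp) i0 hi0N
        (by show g i0 ∈ Z; rw [hgi0]; exact hz)
    have hEZ : E ⊆ Z := by
      intro e he
      obtain ⟨k, hkN, hk⟩ := hgsurj e he
      rw [← hk]
      exact hall k hkN
    exact (Finset.ssubset_def.1 hZsub).2 hEZ
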